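/- arXiv:0805.2520 — 4 statements merged into one kernel-verified Lean document; each statement's English description precedes it below -/
import Mathlib

section
/- Let h be a real Lie algebra, V a vector space with dim V = dim h, and π a representation of h on V. If J is an abelian totally real complex structure on the semidirect product h ⋉_π V, then h is abelian and π(x)(Jy) = π(y)(Jx) for all x,y ∈ h. -/
open LieAlgebra

attribute [local instance 100] LieRing.ofAssociativeRing

noncomputable section

section SD

variable {h V : Type*} [LieRing h] [LieAlgebra ℝ h] [AddCommGroup V] [Module ℝ V]

/-- The underlying type of the semidirect product `h ⋉_π V`. -/
def Sd (_π : h →ₗ⁅ℝ⁆ Module.End ℝ V) : Type _ := h × V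

namespace Sd

variable (π : h →ₗ⁅ℝ⁆ Module.End ℝ V)

instance : AddCommGroup (Sd π) := inferInstanceAs (AddCommGroup (h × V))
instance : Module ℝ (Sd π) := inferInstanceAs (Module ℝ (h × V))

variable {π}

/-- An element of the semidirect product. -/
def mk (x : h) (v : V) : Sd π := (x, v)

def pr1 (p : Sd π) : h := Prod.fst p
def pr2 (p : Sd π) : V := Prod.snd p

@[simp] lemma pr1_mk (x : h) (v : V) : pr1 (mk (π := π) x v) = x := rfl
@[simp] lemma pr2_mk (x : h) (v : V) : pr2 (mk (π := π) x v) = v := rfl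
@[simp] lemma mk_add_mk (x y : h) (u v : V) :
    (mk (π := π) x u) + (mk y v) = mk (x + y) (u + v) := rfl
@[simp] lemma smul_mk (t : ℝ) (x : h) (v : V) :
    t • (mk (π := π) x v) = mk (t • x) (t • v) := rfl
@[simp] lemma neg_mk (x : h) (v : V) : -(mk (π := π) x v) = mk (-x) (-v) := rfl
lemma ext_iff {p q : Sd π} : p = q ↔ pr1 p = pr1 q ∧ pr2 p = pr2 q := Prod.ext_iff
@[simp] lemma mk_inj {x y : h} {u v : V} :
    (mk (π := π) x u) = mk y v ↔ x = y ∧ u = v := Prod.ext_iff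
lemma mk_surj (p : Sd π) : ∃ x v, p = mk x v := ⟨pr1 p, pr2 p, rfl⟩

variable (π)

instance : LieRing (Sd π) where
  bracket p q := mk ⁅pr1 p, pr1 q⁆ (π (pr1 p) (pr2 q) - π (pr1 q) (pr2 p))
  add_lie p q r := by
    obtain ⟨x, u, rfl⟩ := mk_surj p; obtain ⟨y, v, rfl⟩ := mk_surj q
    obtain ⟨z, w, rfl⟩ := mk_surj r
    show mk _ _ = mk _ _ + mk _ _
    simp [add_lie, map_add]
    abel
  lie_add p q r := by
    obtain ⟨x, u, rfl⟩ := mk_surj p; obtain ⟨y, v, rfl⟩ := mk_surj q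
    obtain ⟨z, w, rfl⟩ := mk_surj r
    show mk _ _ = mk _ _ + mk _ _
    simp [lie_add, map_add]
    abel
  lie_self p := by
    obtain ⟨x, u, rfl⟩ := mk_surj p
    show mk _ _ = (0 : h × V)
    simp
    rfl
  leibniz_lie p q r := by
    obtain ⟨x, u, rfl⟩ := mk_surj p; obtain ⟨y, v, rfl⟩ := mk_surj q
    obtain ⟨z, w, rfl⟩ := mk_surj r
    show mk _ _ = mk _ _ + mk _ _
    have hxy : π ⁅x, y⁆ = π x * π y - π y * π x := by
      rw [LieHom.map_lie]; rfl
    have hyz : π ⁅y, z⁆ = π y * π z - π z * π y := by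
      rw [LieHom.map_lie]; rfl
    have hxz : π ⁅x, z⁆ = π x * π z - π z * π x := by
      rw [LieHom.map_lie]; rfl
    simp [hxy, hyz, hxz, LinearMap.sub_apply, Module.End.mul_apply, map_sub]
    abel

instance : LieAlgebra ℝ (Sd π) where
  lie_smul t p q := by
    obtain ⟨x, u, rfl⟩ := mk_surj p; obtain ⟨y, v, rfl⟩ := mk_surj q
    show mk _ _ = t • mk _ _
    simp [smul_sub]

@[simp] lemma lie_mk (x y : h) (u v : V) :
    ⁅(Sd.mk (π := π) x u), (Sd.mk (π := π) y v)⁆ = mk ⁅x, y⁆ (π x v - π y u) := rfl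

variable {π}

/-- The copy of `h` inside `h ⋉_π V`. -/
def hPart (π : h →ₗ⁅ℝ⁆ Module.End ℝ V) : Submodule ℝ (Sd π) where
  carrier := {p | pr2 p = 0}
  add_mem' := by
    rintro p q hp hq
    obtain ⟨x, u, rfl⟩ := mk_surj p; obtain ⟨y, v, rfl⟩ := mk_surj q
    simp_all [Set.mem_setOf_eq]
  zero_mem' := rfl
  smul_mem' := by
    rintro t p hp
    obtain ⟨x, u, rfl⟩ := mk_surj p
    simp_all [Set.mem_setOf_eq]

/-- The copy of `V` inside `h ⋉_π V`. -/
def vPart (π : h →ₗ⁅ℝ⁆ Module.End ℝ V) : Submodule ℝ (Sd π) where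
  carrier := {p | pr1 p = 0}
  add_mem' := by
    rintro p q hp hq
    obtain ⟨x, u, rfl⟩ := mk_surj p; obtain ⟨y, v, rfl⟩ := mk_surj q
    simp_all [Set.mem_setOf_eq]
  zero_mem' := rfl
  smul_mem' := by
    rintro t p hp
    obtain ⟨x, u, rfl⟩ := mk_surj p
    simp_all [Set.mem_setOf_eq]

end Sd

end SD

section Cpx

variable {g : Type*} [LieRing g] [LieAlgebra ℝ g]

/-- A complex structure on a real Lie algebra: `J² = -I` and the Nijenhuis tensor of `J`
vanishes. -/
def IsCpxStruct (J : g →ₗ[ℝ] g) : Prop :=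
  (∀ x, J (J x) = -x) ∧
  ∀ x y : g, ⁅J x, J y⁆ - ⁅x, y⁆ - J ⁅J x, y⁆ - J ⁅x, J y⁆ = 0

/-- An abelian complex structure. -/
def IsAbelianCpx (J : g →ₗ[ℝ] g) : Prop := ∀ x y : g, ⁅J x, J y⁆ = ⁅x, y⁆

/-- A bi-invariant complex structure. -/
def IsBiinvariant (J : g →ₗ[ℝ] g) : Prop := ∀ x y : g, J ⁅x, y⁆ = ⁅x, J y⁆

/-- A totally real (almost) complex structure on a semidirect product: `J h = V`. -/
def IsTotallyReal {h V : Type*} [LieRing h] [LieAlgebra ℝ h] [AddCommGroup V] [Module ℝ V]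
    (π : h →ₗ⁅ℝ⁆ Module.End ℝ V) (J : Sd π →ₗ[ℝ] Sd π) : Prop :=
  (Sd.hPart π).map J = Sd.vPart π

end Cpx


section DualRep

variable {h V : Type*} [LieRing h] [LieAlgebra ℝ h] [AddCommGroup V] [Module ℝ V]

/-- The dual representation `π*` of a representation `π`, `(π*(x)a)(u) = -a(π(x)u)`. -/
def dualRep (π : h →ₗ⁅ℝ⁆ Module.End ℝ V) : h →ₗ⁅ℝ⁆ Module.End ℝ (Module.Dual ℝ V) where
  toFun x := -(π x).dualMap
  map_add' x y := by ext φ v; simp [map_add]; abel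
  map_smul' t x := by ext φ v; simp
  map_lie' {x y} := by
    ext φ v
    have : π ⁅x, y⁆ = π x * π y - π y * π x := by rw [LieHom.map_lie]; rfl
    simp [Ring.lie_def, Module.End.mul_apply, this, LinearMap.sub_apply]

@[simp] lemma dualRep_apply (π : h →ₗ⁅ℝ⁆ Module.End ℝ V) (x : h) (φ : Module.Dual ℝ V)
    (v : V) : dualRep π x φ v = -φ (π x v) := rfl

end DualRep

section TanCot

variable (h : Type*) [LieRing h] [LieAlgebra ℝ h]

/-- The coadjoint representation of `h` on `h*`. -/
abbrev coadRep : h →ₗ⁅ℝ⁆ Module.End ℝ (Module.Dual ℝ h) := dualRep (LieAlgebra.ad ℝ h)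

/-- The tangent Lie algebra `T h = h ⋉_ad h`. -/
abbrev TangentAlg := Sd (LieAlgebra.ad ℝ h)

/-- The cotangent Lie algebra `T*h = h ⋉_ad* h*`. -/
abbrev CotangentAlg := Sd (coadRep h)

/-- The canonical neutral metric on the cotangent Lie algebra `T*h`:
`⟨(x,φ),(y,ψ)⟩ = ψ(x) + φ(y)`. -/
def canMetric (p q : CotangentAlg h) : ℝ := Sd.pr2 p (Sd.pr1 q) + Sd.pr2 q (Sd.pr1 p)

end TanCot

section MorePreds

variable {g : Type*} [LieRing g] [LieAlgebra ℝ g]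

/-- A derivation of a Lie algebra. -/
def IsDer (d : g →ₗ[ℝ] g) : Prop := ∀ x y : g, d ⁅x, y⁆ = ⁅d x, y⁆ + ⁅x, d y⁆

/-- The ascending series `a_l(J)` associated to an almost complex structure `J`. -/
def aSer (J : g →ₗ[ℝ] g) : ℕ → Set g
  | 0 => {0}
  | l + 1 => {x | (∀ y : g, ⁅x, y⁆ ∈ aSer J l) ∧ ∀ y : g, ⁅J x, y⁆ ∈ aSer J l}

/-- A nilpotent (almost) complex structure: `a_t(J) = g` for some `t`. -/
def IsNilpotentCpx (J : g →ₗ[ℝ] g) : Prop := ∃ t, aSer J t = Set.univ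

/-- An `r`-step nilpotent (almost) complex structure. -/
def IsNilpotentStepCpx (J : g →ₗ[ℝ] g) (r : ℕ) : Prop :=
  aSer J r = Set.univ ∧ ∀ s < r, aSer J s ≠ Set.univ

/-- A symplectic structure on a Lie algebra, as a bilinear, alternating, nondegenerate,
closed 2-form. -/
def IsSymplForm (ω : g → g → ℝ) : Prop :=
  (∀ x : g, IsLinearMap ℝ (ω x)) ∧ (∀ y : g, IsLinearMap ℝ (fun x => ω x y)) ∧
  (∀ x : g, ω x x = 0) ∧ (∀ x : g, (∀ y : g, ω x y = 0) → x = 0) ∧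
  ∀ x y z : g, ω ⁅x, y⁆ z + ω ⁅y, z⁆ x + ω ⁅z, x⁆ y = 0

/-- A Kähler structure: a compatible pair of a complex structure and a symplectic
structure. -/
def IsKahlerPair (J : g →ₗ[ℝ] g) (ω : g → g → ℝ) : Prop :=
  IsCpxStruct J ∧ IsSymplForm ω ∧ ∀ x y : g, ω (J x) (J y) = ω x y

end MorePreds

section LagSympl

variable {h V : Type*} [LieRing h] [LieAlgebra ℝ h] [AddCommGroup V] [Module ℝ V]

/-- A lagrangian symplectic structure on a semidirect product `h ⋉_π V`: both `h` and `V`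
are totally isotropic. -/
def IsLagrangianSympl (π : h →ₗ⁅ℝ⁆ Module.End ℝ V) (ω : Sd π → Sd π → ℝ) : Prop :=
  IsSymplForm ω ∧ (∀ x y : h, ω (Sd.mk x 0) (Sd.mk y 0) = 0) ∧
    ∀ u v : V, ω (Sd.mk 0 u) (Sd.mk 0 v) = 0

end LagSympl

section Solv3

/-- A `2 × 2` real matrix as an endomorphism of `ℝ²`. -/
def endOf (a b c d : ℝ) : Module.End ℝ (Fin 2 → ℝ) where
  toFun v := ![a * v 0 + b * v 1, c * v 0 + d * v 1]
  map_add' u v := by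
    funext i; fin_cases i <;> simp [Matrix.cons_val_zero, Matrix.cons_val_one] <;> ring
  map_smul' t v := by
    funext i; fin_cases i <;> simp [Matrix.cons_val_zero, Matrix.cons_val_one] <;> ring

/-- The representation of the abelian Lie algebra `ℝ` on `ℝ²` sending `t` to `t • A`. -/
def rep2 (A : Module.End ℝ (Fin 2 → ℝ)) : ℝ →ₗ⁅ℝ⁆ Module.End ℝ (Fin 2 → ℝ) where
  toFun t := t • A
  map_add' s t := by simp [add_smul]
  map_smul' s t := by simp [mul_smul]
  map_lie' {s t} := by
    ext v
    simp [Ring.lie_def, Module.End.mul_apply, smul_smul, mul_comm]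

/-- The solvable Lie algebra `ℝ ⋉_A ℝ²` determined by a `2 × 2` matrix `A`. -/
abbrev Solv3 (A : Module.End ℝ (Fin 2 → ℝ)) := Sd (rep2 A)

/-- The 3-dimensional Heisenberg Lie algebra `h1`: `[e1,e2] = e3`. -/
abbrev H1 := Solv3 (endOf 0 0 1 0)

/-- The Lie algebra `r3`: `[e1,e2] = e2`, `[e1,e3] = e2 + e3`. -/
abbrev R3 := Solv3 (endOf 1 1 0 1)

/-- The Lie algebra `r_{3,λ}`: `[e1,e2] = e2`, `[e1,e3] = λ e3`. -/
abbrev R3l (lam : ℝ) := Solv3 (endOf 1 0 0 lam)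

/-- The Lie algebra `r'_{3,η}`: `[e1,e2] = ηe2 - e3`, `[e1,e3] = e2 + ηe3`. -/
abbrev R3e' (eta : ℝ) := Solv3 (endOf eta 1 (-1) eta)

namespace Solv3

variable (A : Module.End ℝ (Fin 2 → ℝ))

/-- The basis vector `e1` of `ℝ ⋉_A ℝ²`. -/
def E1 : Solv3 A := Sd.mk 1 0
/-- The basis vector `e2` of `ℝ ⋉_A ℝ²`. -/
def E2 : Solv3 A := Sd.mk 0 ![1, 0]
/-- The basis vector `e3` of `ℝ ⋉_A ℝ²`. -/
def E3 : Solv3 A := Sd.mk 0 ![0, 1]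

/-- The dual basis vector `e1* ∈ (ℝ ⋉_A ℝ²)*`. -/
def D1 : Module.Dual ℝ (Solv3 A) := LinearMap.fst ℝ ℝ (Fin 2 → ℝ)
/-- The dual basis vector `e2* ∈ (ℝ ⋉_A ℝ²)*`. -/
def D2 : Module.Dual ℝ (Solv3 A) :=
  (LinearMap.proj 0).comp (LinearMap.snd ℝ ℝ (Fin 2 → ℝ))
/-- The dual basis vector `e3* ∈ (ℝ ⋉_A ℝ²)*`. -/
def D3 : Module.Dual ℝ (Solv3 A) :=
  (LinearMap.proj 1).comp (LinearMap.snd ℝ ℝ (Fin 2 → ℝ))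

end Solv3

end Solv3

section Simple3



/-- Structure-constant bracket of a concrete copy of `sl(2,ℝ)`. -/
def sl2Br (x y : Fin 3 → ℝ) : Fin 3 → ℝ :=
  ![2 * (x 2 * y 0 - y 2 * x 0), -2 * (x 2 * y 1 - y 2 * x 1), x 0 * y 1 - y 0 * x 1]

/-- Structure-constant bracket of a concrete copy of `so(3)`. -/
def so3Br (x y : Fin 3 → ℝ) : Fin 3 → ℝ :=
  ![-(x 2 * y 1 - y 2 * x 1), x 2 * y 0 - y 2 * x 0, x 0 * y 1 - y 0 * x 1]

/-- Structure-constant bracket of the complex Heisenberg algebra. -/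
def ch1Br (x y : Fin 3 → ℂ) : Fin 3 → ℂ := ![0, 0, x 0 * y 1 - y 0 * x 1]

section BrLemmas

lemma sl2Br_add_left (x y z : Fin 3 → ℝ) :
    sl2Br (x + y) z = sl2Br x z + sl2Br y z := by
  funext i; fin_cases i <;> simp [sl2Br] <;> ring
lemma sl2Br_add_right (x y z : Fin 3 → ℝ) :
    sl2Br x (y + z) = sl2Br x y + sl2Br x z := by
  funext i; fin_cases i <;> simp [sl2Br] <;> ring
lemma sl2Br_self (x : Fin 3 → ℝ) : sl2Br x x = 0 := by
  funext i; fin_cases i <;> simp [sl2Br] <;> ring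
lemma sl2Br_leibniz (x y z : Fin 3 → ℝ) :
    sl2Br x (sl2Br y z) = sl2Br (sl2Br x y) z + sl2Br y (sl2Br x z) := by
  funext i; fin_cases i <;> simp [sl2Br] <;> ring
lemma sl2Br_smul (t : ℝ) (x y : Fin 3 → ℝ) : sl2Br x (t • y) = t • sl2Br x y := by
  funext i; fin_cases i <;> simp [sl2Br] <;> ring

lemma so3Br_add_left (x y z : Fin 3 → ℝ) :
    so3Br (x + y) z = so3Br x z + so3Br y z := by
  funext i; fin_cases i <;> simp [so3Br] <;> ring
lemma so3Br_add_right (x y z : Fin 3 → ℝ) :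
    so3Br x (y + z) = so3Br x y + so3Br x z := by
  funext i; fin_cases i <;> simp [so3Br] <;> ring
lemma so3Br_self (x : Fin 3 → ℝ) : so3Br x x = 0 := by
  funext i; fin_cases i <;> simp [so3Br] <;> ring
lemma so3Br_leibniz (x y z : Fin 3 → ℝ) :
    so3Br x (so3Br y z) = so3Br (so3Br x y) z + so3Br y (so3Br x z) := by
  funext i; fin_cases i <;> simp [so3Br] <;> ring
lemma so3Br_smul (t : ℝ) (x y : Fin 3 → ℝ) : so3Br x (t • y) = t • so3Br x y := by
  funext i; fin_cases i <;> simp [so3Br] <;> ring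

lemma ch1Br_add_left (x y z : Fin 3 → ℂ) :
    ch1Br (x + y) z = ch1Br x z + ch1Br y z := by
  funext i; fin_cases i <;> simp [ch1Br] <;> ring
lemma ch1Br_add_right (x y z : Fin 3 → ℂ) :
    ch1Br x (y + z) = ch1Br x y + ch1Br x z := by
  funext i; fin_cases i <;> simp [ch1Br] <;> ring
lemma ch1Br_self (x : Fin 3 → ℂ) : ch1Br x x = 0 := by
  funext i; fin_cases i <;> simp [ch1Br] <;> ring
lemma ch1Br_leibniz (x y z : Fin 3 → ℂ) :
    ch1Br x (ch1Br y z) = ch1Br (ch1Br x y) z + ch1Br y (ch1Br x z) := by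
  funext i; fin_cases i <;> simp [ch1Br] <;> ring
lemma ch1Br_smul (t : ℝ) (x y : Fin 3 → ℂ) : ch1Br x (t • y) = t • ch1Br x y := by
  funext i; fin_cases i <;> simp [ch1Br] <;> ring

end BrLemmas

/-- A concrete copy of `sl(2,ℝ)`. -/
def SL2 : Type := Fin 3 → ℝ

namespace SL2
instance : AddCommGroup SL2 := inferInstanceAs (AddCommGroup (Fin 3 → ℝ))
instance : Module ℝ SL2 := inferInstanceAs (Module ℝ (Fin 3 → ℝ))
instance : LieRing SL2 where
  bracket := sl2Br
  add_lie := sl2Br_add_left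
  lie_add := sl2Br_add_right
  lie_self := sl2Br_self
  leibniz_lie := sl2Br_leibniz
instance : LieAlgebra ℝ SL2 where
  lie_smul := sl2Br_smul
def E1 : SL2 := ![1, 0, 0]
def E2 : SL2 := ![0, 1, 0]
def E3 : SL2 := ![0, 0, 1]
end SL2

/-- A concrete copy of `so(3)`. -/
def SO3 : Type := Fin 3 → ℝ

namespace SO3
instance : AddCommGroup SO3 := inferInstanceAs (AddCommGroup (Fin 3 → ℝ))
instance : Module ℝ SO3 := inferInstanceAs (Module ℝ (Fin 3 → ℝ))
instance : LieRing SO3 where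
  bracket := so3Br
  add_lie := so3Br_add_left
  lie_add := so3Br_add_right
  lie_self := so3Br_self
  leibniz_lie := so3Br_leibniz
instance : LieAlgebra ℝ SO3 where
  lie_smul := so3Br_smul
def E1 : SO3 := ![1, 0, 0]
def E2 : SO3 := ![0, 1, 0]
def E3 : SO3 := ![0, 0, 1]
end SO3

/-- The real Lie algebra underlying the complexification `h1 ⊗ ℂ` of the 3-dimensional
Heisenberg Lie algebra. -/
def CH1 : Type := Fin 3 → ℂ

namespace CH1
instance : AddCommGroup CH1 := inferInstanceAs (AddCommGroup (Fin 3 → ℂ))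
instance : Module ℝ CH1 := inferInstanceAs (Module ℝ (Fin 3 → ℂ))
instance : LieRing CH1 where
  bracket := ch1Br
  add_lie := ch1Br_add_left
  lie_add := ch1Br_add_right
  lie_self := ch1Br_self
  leibniz_lie := ch1Br_leibniz
instance : LieAlgebra ℝ CH1 where
  lie_smul := ch1Br_smul
end CH1

end Simple3

end
/-- If `J` is an abelian totally real complex structure on `h ⋉_π V`, then
`h` is abelian and `π(x)(Jy) = π(y)(Jx)` for all `x, y ∈ h`. -/
theorem abelian_totallyReal_cpx_implies_abelian
    {h V : Type*} [LieRing h] [LieAlgebra ℝ h] [AddCommGroup V] [Module ℝ V]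
    [FiniteDimensional ℝ h] [FiniteDimensional ℝ V]
    (hdim : Module.finrank ℝ V = Module.finrank ℝ h)
    (π : h →ₗ⁅ℝ⁆ Module.End ℝ V) (J : Sd π →ₗ[ℝ] Sd π)
    (hJ : IsCpxStruct J) (hab : IsAbelianCpx J) (htr : IsTotallyReal π J) :
    IsLieAbelian h ∧
      ∀ x y : h, π x (Sd.pr2 (J (Sd.mk y 0))) = π y (Sd.pr2 (J (Sd.mk x 0))) := by

  obtain ⟨hJ2, _⟩ := hJ
  have key : ∀ x : h, J (Sd.mk (π := π) x 0) = Sd.mk 0 (Sd.pr2 (J (Sd.mk (π := π) x 0))) := by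
    intro x
    have hmem : Sd.mk (π := π) x 0 ∈ Sd.hPart π := rfl
    have hv : J (Sd.mk (π := π) x 0) ∈ Sd.vPart π := by
      rw [← htr]; exact Submodule.mem_map_of_mem hmem
    have h1 : Sd.pr1 (J (Sd.mk (π := π) x 0)) = 0 := hv
    rw [Sd.ext_iff]
    exact ⟨by simpa using h1, by simp⟩
  constructor
  · constructor
    intro x y
    have h1 := hab (Sd.mk (π := π) x 0) (Sd.mk y 0)
    rw [key x, key y, Sd.lie_mk, Sd.lie_mk] at h1
    simp only [map_zero, LinearMap.zero_apply, sub_zero, zero_sub, lie_self, map_zero,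
      neg_zero, Sd.mk_inj] at h1
    exact h1.1.symm
  · intro x y
    have h1 := hab (J (Sd.mk (π := π) x 0)) (Sd.mk y 0)
    rw [hJ2] at h1
    have hneg : (-(Sd.mk (π := π) x 0)) = Sd.mk (-x) 0 := by simp
    rw [hneg, key x, key y, Sd.lie_mk, Sd.lie_mk] at h1
    simp only [map_zero, map_neg, LinearMap.zero_apply, LinearMap.neg_apply, sub_zero,
      zero_sub, Sd.mk_inj] at h1
    have h2 := h1.2
    have h3 : π (-x) = -(π x) := by simp
    simp only [LinearMap.neg_apply, neg_inj] at h2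
    exact h2
end

section
/- The tangent Lie algebra T h1 of the 3-dimensional Heisenberg Lie algebra admits both abelian complex structures and non-abelian complex structures, and every complex structure on T h1 is 2-step nilpotent. -/
open LieAlgebra

attribute [local instance 100] LieRing.ofAssociativeRing

noncomputable section TH1Aux

namespace TH1Aux

abbrev G := TangentAlg H1

/-- build an element of `T h1` out of 6 coordinates -/
def mk6 (a b c d e f : ℝ) : G := Sd.mk (Sd.mk a ![b, c]) (Sd.mk d ![e, f])

def Y1 : G →ₗ[ℝ] ℝ where
  toFun p := Sd.pr1 (Sd.pr1 p)
  map_add' _ _ := rfl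
  map_smul' _ _ := rfl

def Y2 : G →ₗ[ℝ] ℝ where
  toFun p := Sd.pr2 (Sd.pr1 p) 0
  map_add' _ _ := rfl
  map_smul' _ _ := rfl

def Y3 : G →ₗ[ℝ] ℝ where
  toFun p := Sd.pr2 (Sd.pr1 p) 1
  map_add' _ _ := rfl
  map_smul' _ _ := rfl

def Y4 : G →ₗ[ℝ] ℝ where
  toFun p := Sd.pr1 (Sd.pr2 p)
  map_add' _ _ := rfl
  map_smul' _ _ := rfl

def Y5 : G →ₗ[ℝ] ℝ where
  toFun p := Sd.pr2 (Sd.pr2 p) 0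
  map_add' _ _ := rfl
  map_smul' _ _ := rfl

def Y6 : G →ₗ[ℝ] ℝ where
  toFun p := Sd.pr2 (Sd.pr2 p) 1
  map_add' _ _ := rfl
  map_smul' _ _ := rfl

@[simp] lemma Y1_mk6 (a b c d e f : ℝ) : Y1 (mk6 a b c d e f) = a := rfl
@[simp] lemma Y2_mk6 (a b c d e f : ℝ) : Y2 (mk6 a b c d e f) = b := rfl
@[simp] lemma Y3_mk6 (a b c d e f : ℝ) : Y3 (mk6 a b c d e f) = c := rfl
@[simp] lemma Y4_mk6 (a b c d e f : ℝ) : Y4 (mk6 a b c d e f) = d := rfl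
@[simp] lemma Y5_mk6 (a b c d e f : ℝ) : Y5 (mk6 a b c d e f) = e := rfl
@[simp] lemma Y6_mk6 (a b c d e f : ℝ) : Y6 (mk6 a b c d e f) = f := rfl

lemma decomp (p : G) : p = mk6 (Y1 p) (Y2 p) (Y3 p) (Y4 p) (Y5 p) (Y6 p) := by
  obtain ⟨x, v, rfl⟩ := Sd.mk_surj p
  obtain ⟨s, u, rfl⟩ := Sd.mk_surj x
  obtain ⟨t, w, rfl⟩ := Sd.mk_surj v
  show Sd.mk (Sd.mk s u) (Sd.mk t w) = Sd.mk (Sd.mk s ![u 0, u 1]) (Sd.mk t ![w 0, w 1])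
  have hu : u = ![u 0, u 1] := by funext i; fin_cases i <;> rfl
  have hw : w = ![w 0, w 1] := by funext i; fin_cases i <;> rfl
  rw [← hu, ← hw]

lemma ext6 {p q : G} (h1 : Y1 p = Y1 q) (h2 : Y2 p = Y2 q) (h3 : Y3 p = Y3 q)
    (h4 : Y4 p = Y4 q) (h5 : Y5 p = Y5 q) (h6 : Y6 p = Y6 q) : p = q := by
  rw [decomp p, decomp q, h1, h2, h3, h4, h5, h6]

lemma lie_mk6 (a b c d e f a' b' c' d' e' f' : ℝ) :
    ⁅mk6 a b c d e f, mk6 a' b' c' d' e' f'⁆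
      = mk6 0 0 (a * b' - b * a') 0 0 (a * e' - e * a' - b * d' + d * b') := by
  unfold mk6
  rw [Sd.lie_mk]
  congr 1
  · show (⁅Sd.mk a ![b,c], Sd.mk a' ![b',c']⁆ : H1) = _
    rw [Sd.lie_mk]
    congr 1
    · show a * a' - a' * a = 0
      ring
    · show (rep2 _) a ![b', c'] - (rep2 _) a' ![b, c] = ![0, a * b' - b * a']
      show a • (endOf 0 0 1 0) ![b', c'] - a' • (endOf 0 0 1 0) ![b, c] = _
      show a • ![0 * b' + 0 * c', 1 * b' + 0 * c'] - a' • ![0 * b + 0 * c, 1 * b + 0 * c] = _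
      funext i; fin_cases i <;> simp <;> ring
  · show (LieAlgebra.ad ℝ H1) (Sd.mk a ![b,c]) (Sd.mk d' ![e',f'])
        - (LieAlgebra.ad ℝ H1) (Sd.mk a' ![b',c']) (Sd.mk d ![e,f]) = _
    rw [LieAlgebra.ad_apply, LieAlgebra.ad_apply, Sd.lie_mk, Sd.lie_mk]
    show Sd.mk _ _ - Sd.mk _ _ = _
    have h1 : (⁅a, d'⁆ : ℝ) = 0 := by rw [Ring.lie_def]; ring
    have h2 : (⁅a', d⁆ : ℝ) = 0 := by rw [Ring.lie_def]; ring
    rw [sub_eq_add_neg, Sd.neg_mk, Sd.mk_add_mk, h1, h2]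
    congr 1
    · ring
    · show (rep2 _) a ![e', f'] - (rep2 _) d' ![b, c]
          + -((rep2 _) a' ![e, f] - (rep2 _) d ![b', c']) = _
      show a • (endOf 0 0 1 0) ![e', f'] - d' • (endOf 0 0 1 0) ![b, c]
          + -(a' • (endOf 0 0 1 0) ![e, f] - d • (endOf 0 0 1 0) ![b', c']) = _
      show a • ![0 * e' + 0 * f', 1 * e' + 0 * f'] - d' • ![0 * b + 0 * c, 1 * b + 0 * c]
          + -(a' • ![0 * e + 0 * f, 1 * e + 0 * f] - d • ![0 * b' + 0 * c', 1 * b' + 0 * c']) = _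
      funext i; fin_cases i <;> simp <;> ring

@[simp] lemma Y1_lie (p q : G) : Y1 ⁅p, q⁆ = 0 := by
  conv_lhs => rw [decomp p, decomp q, lie_mk6]
  simp

@[simp] lemma Y2_lie (p q : G) : Y2 ⁅p, q⁆ = 0 := by
  conv_lhs => rw [decomp p, decomp q, lie_mk6]
  simp

@[simp] lemma Y4_lie (p q : G) : Y4 ⁅p, q⁆ = 0 := by
  conv_lhs => rw [decomp p, decomp q, lie_mk6]
  simp

@[simp] lemma Y5_lie (p q : G) : Y5 ⁅p, q⁆ = 0 := by
  conv_lhs => rw [decomp p, decomp q, lie_mk6]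
  simp

@[simp] lemma Y3_lie (p q : G) : Y3 ⁅p, q⁆ = Y1 p * Y2 q - Y2 p * Y1 q := by
  conv_lhs => rw [decomp p, decomp q, lie_mk6]
  simp

@[simp] lemma Y6_lie (p q : G) :
    Y6 ⁅p, q⁆ = Y1 p * Y5 q - Y5 p * Y1 q - Y2 p * Y4 q + Y4 p * Y2 q := by
  conv_lhs => rw [decomp p, decomp q, lie_mk6]
  simp

def E1 : G := mk6 1 0 0 0 0 0
def E2 : G := mk6 0 1 0 0 0 0
def E3 : G := mk6 0 0 1 0 0 0
def E4 : G := mk6 0 0 0 1 0 0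
def E5 : G := mk6 0 0 0 0 1 0
def E6 : G := mk6 0 0 0 0 0 1

@[simp] lemma Y1_E1 : Y1 E1 = 1 := rfl
@[simp] lemma Y2_E1 : Y2 E1 = 0 := rfl
@[simp] lemma Y3_E1 : Y3 E1 = 0 := rfl
@[simp] lemma Y4_E1 : Y4 E1 = 0 := rfl
@[simp] lemma Y5_E1 : Y5 E1 = 0 := rfl
@[simp] lemma Y6_E1 : Y6 E1 = 0 := rfl
@[simp] lemma Y1_E2 : Y1 E2 = 0 := rfl
@[simp] lemma Y2_E2 : Y2 E2 = 1 := rfl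
@[simp] lemma Y3_E2 : Y3 E2 = 0 := rfl
@[simp] lemma Y4_E2 : Y4 E2 = 0 := rfl
@[simp] lemma Y5_E2 : Y5 E2 = 0 := rfl
@[simp] lemma Y6_E2 : Y6 E2 = 0 := rfl
@[simp] lemma Y1_E3 : Y1 E3 = 0 := rfl
@[simp] lemma Y2_E3 : Y2 E3 = 0 := rfl
@[simp] lemma Y3_E3 : Y3 E3 = 1 := rfl
@[simp] lemma Y4_E3 : Y4 E3 = 0 := rfl
@[simp] lemma Y5_E3 : Y5 E3 = 0 := rfl
@[simp] lemma Y6_E3 : Y6 E3 = 0 := rfl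
@[simp] lemma Y1_E4 : Y1 E4 = 0 := rfl
@[simp] lemma Y2_E4 : Y2 E4 = 0 := rfl
@[simp] lemma Y3_E4 : Y3 E4 = 0 := rfl
@[simp] lemma Y4_E4 : Y4 E4 = 1 := rfl
@[simp] lemma Y5_E4 : Y5 E4 = 0 := rfl
@[simp] lemma Y6_E4 : Y6 E4 = 0 := rfl
@[simp] lemma Y1_E5 : Y1 E5 = 0 := rfl
@[simp] lemma Y2_E5 : Y2 E5 = 0 := rfl
@[simp] lemma Y3_E5 : Y3 E5 = 0 := rfl
@[simp] lemma Y4_E5 : Y4 E5 = 0 := rfl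
@[simp] lemma Y5_E5 : Y5 E5 = 1 := rfl
@[simp] lemma Y6_E5 : Y6 E5 = 0 := rfl
@[simp] lemma Y1_E6 : Y1 E6 = 0 := rfl
@[simp] lemma Y2_E6 : Y2 E6 = 0 := rfl
@[simp] lemma Y3_E6 : Y3 E6 = 0 := rfl
@[simp] lemma Y4_E6 : Y4 E6 = 0 := rfl
@[simp] lemma Y5_E6 : Y5 E6 = 0 := rfl
@[simp] lemma Y6_E6 : Y6 E6 = 1 := rfl

/-- elements of the centre, in coordinates -/
def Z (p : G) : Prop := Y1 p = 0 ∧ Y2 p = 0 ∧ Y4 p = 0 ∧ Y5 p = 0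

lemma Z_lie (p q : G) : Z ⁅p, q⁆ := ⟨by simp, by simp, by simp, by simp⟩

lemma central_of_Z {p : G} (h : Z p) (q : G) : ⁅p, q⁆ = 0 := by
  obtain ⟨h1, h2, h4, h5⟩ := h
  apply ext6 <;> simp [h1, h2, h4, h5]

lemma decompZ {p : G} (h : Z p) : p = Y3 p • E3 + Y6 p • E6 := by
  obtain ⟨h1, h2, h4, h5⟩ := h
  apply ext6 <;> simp [E3, E6, h1, h2, h4, h5]


/-! ### The abelian complex structure -/

def Jab : G →ₗ[ℝ] G where
  toFun p := mk6 (-(Y2 p)) (Y1 p) (-(Y6 p)) (-(Y5 p)) (Y4 p) (Y3 p)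
  map_add' p q := by apply ext6 <;> simp <;> ring
  map_smul' t p := by apply ext6 <;> simp <;> ring

@[simp] lemma Y1_Jab (p : G) : Y1 (Jab p) = -(Y2 p) := rfl
@[simp] lemma Y2_Jab (p : G) : Y2 (Jab p) = Y1 p := rfl
@[simp] lemma Y3_Jab (p : G) : Y3 (Jab p) = -(Y6 p) := rfl
@[simp] lemma Y4_Jab (p : G) : Y4 (Jab p) = -(Y5 p) := rfl
@[simp] lemma Y5_Jab (p : G) : Y5 (Jab p) = Y4 p := rfl
@[simp] lemma Y6_Jab (p : G) : Y6 (Jab p) = Y3 p := rfl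

lemma Jab_sq (x : G) : Jab (Jab x) = -x := by apply ext6 <;> simp

lemma Jab_abelian : IsAbelianCpx Jab := by
  intro x y
  apply ext6 <;> simp <;> ring

lemma cpx_of_abelian (J : G →ₗ[ℝ] G) (h2 : ∀ x, J (J x) = -x) (hab : IsAbelianCpx J) :
    IsCpxStruct J := by
  refine ⟨h2, fun x y => ?_⟩
  have h1 : ⁅J x, y⁆ = -⁅x, J y⁆ := by
    have h := hab (J x) y
    rw [h2 x, neg_lie] at h
    exact h.symm
  rw [hab x y, h1, map_neg]
  abel

lemma Jab_cpx : IsCpxStruct Jab := cpx_of_abelian _ Jab_sq Jab_abelian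

/-! ### The non-abelian complex structure -/

def Jna : G →ₗ[ℝ] G where
  toFun p := mk6 (-(Y4 p)) (-(Y5 p)) (-(Y6 p) / 2) (Y1 p) (Y2 p) (2 * Y3 p)
  map_add' p q := by apply ext6 <;> simp <;> ring
  map_smul' t p := by apply ext6 <;> simp <;> ring

@[simp] lemma Y1_Jna (p : G) : Y1 (Jna p) = -(Y4 p) := rfl
@[simp] lemma Y2_Jna (p : G) : Y2 (Jna p) = -(Y5 p) := rfl
@[simp] lemma Y3_Jna (p : G) : Y3 (Jna p) = -(Y6 p) / 2 := rfl
@[simp] lemma Y4_Jna (p : G) : Y4 (Jna p) = Y1 p := rfl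
@[simp] lemma Y5_Jna (p : G) : Y5 (Jna p) = Y2 p := rfl
@[simp] lemma Y6_Jna (p : G) : Y6 (Jna p) = 2 * Y3 p := rfl

lemma Jna_cpx : IsCpxStruct Jna := by
  constructor
  · intro x
    apply ext6 <;> simp <;> ring
  · intro x y
    apply ext6 <;> simp <;> ring

lemma Jna_nonab : ¬ IsAbelianCpx Jna := by
  intro h
  have h' := congrArg Y3 (h E1 E2)
  simp [E1, E2] at h'

/-! ### Every complex structure is 2-step nilpotent -/

lemma Jlie (J : G →ₗ[ℝ] G) (p q : G) :
    J ⁅p, q⁆ = (Y1 p * Y2 q - Y2 p * Y1 q) • J E3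
      + (Y1 p * Y5 q - Y5 p * Y1 q - Y2 p * Y4 q + Y4 p * Y2 q) • J E6 := by
  rw [← map_smul, ← map_smul, ← map_add]
  congr 1
  apply ext6 <;> simp [E3, E6]

lemma ZE3 : Z E3 := ⟨rfl, rfl, rfl, rfl⟩
lemma ZE6 : Z E6 := ⟨rfl, rfl, rfl, rfl⟩

lemma step2 (J : G →ₗ[ℝ] G) (hJ : IsCpxStruct J) : IsNilpotentStepCpx J 2 := by
  obtain ⟨hsq, hN⟩ := hJ
  have key : ∀ x : G, Z x → ∀ y : G, ⁅J x, J y⁆ = J ⁅J x, y⁆ := by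
    intro x hx y
    have h := hN x y
    rw [central_of_Z hx y, central_of_Z hx (J y), map_zero] at h
    simpa [sub_eq_zero] using h
  -- scalar coordinates of J E3 and J E6
  have hc2 : Y2 (J E6) = 0 := by
    have h := congrArg Y2 (key E6 ZE6 E4)
    rw [Jlie] at h
    simp at h
    nlinarith [h, sq_nonneg (Y2 (J E6))]
  have hc1 : Y1 (J E6) = 0 := by
    have h := congrArg Y1 (key E6 ZE6 E5)
    rw [Jlie] at h
    simp at h
    nlinarith [h]
  have hc5 : Y5 (J E6) = 0 := by
    have h := congrArg Y5 (key E6 ZE6 E1)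
    rw [Jlie] at h
    simp [hc2] at h
    nlinarith [h]
  have hc4 : Y4 (J E6) = 0 := by
    have h := congrArg Y4 (key E6 ZE6 E2)
    rw [Jlie] at h
    simp [hc1] at h
    nlinarith [h]
  have ha1 : Y1 (J E3) = 0 := by
    have h := congrArg Y1 (key E3 ZE3 E2)
    rw [Jlie] at h
    simp [hc1] at h
    nlinarith [h]
  have ha2 : Y2 (J E3) = 0 := by
    have h := congrArg Y2 (key E3 ZE3 E1)
    rw [Jlie] at h
    simp [hc2] at h
    nlinarith [h]
  -- use J² = -1 on E6 to kill the remaining coordinates of J E3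
  have hJ6 : J (J E6) = -E6 := hsq E6
  have hd : J E6 = Y3 (J E6) • E3 + Y6 (J E6) • E6 := decompZ ⟨hc1, hc2, hc4, hc5⟩
  rw [hd, map_add, map_smul, map_smul] at hJ6
  have h4 := congrArg Y4 hJ6
  have h5 := congrArg Y5 hJ6
  have h6 := congrArg Y6 hJ6
  simp [hc4, hc5] at h4 h5 h6
  have hc3 : Y3 (J E6) ≠ 0 := by
    intro h0
    rw [h0] at h6
    nlinarith [sq_nonneg (Y6 (J E6))]
  have ha4 : Y4 (J E3) = 0 := by
    rcases h4 with h | h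
    · exact absurd h hc3
    · exact h
  have ha5 : Y5 (J E3) = 0 := by
    rcases h5 with h | h
    · exact absurd h hc3
    · exact h
  have ZJE3 : Z (J E3) := ⟨ha1, ha2, ha4, ha5⟩
  have ZJE6 : Z (J E6) := ⟨hc1, hc2, hc4, hc5⟩
  -- J preserves the centre
  have JZ : ∀ v : G, Z v → Z (J v) := by
    intro v hv
    have : J v = Y3 v • J E3 + Y6 v • J E6 := by
      rw [← map_smul, ← map_smul, ← map_add, ← decompZ hv]
    rw [this]
    refine ⟨?_, ?_, ?_, ?_⟩ <;>
      simp [map_add, map_smul, ZJE3.1, ZJE3.2.1, ZJE3.2.2.1, ZJE3.2.2.2,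
        ZJE6.1, ZJE6.2.1, ZJE6.2.2.1, ZJE6.2.2.2]
  constructor
  · -- aSer J 2 = univ
    rw [Set.eq_univ_iff_forall]
    intro x
    have mem1 : ∀ w : G, Z w → w ∈ aSer J 1 := by
      intro w hw
      show (∀ y : G, ⁅w, y⁆ ∈ aSer J 0) ∧ ∀ y : G, ⁅J w, y⁆ ∈ aSer J 0
      constructor
      · intro y
        rw [central_of_Z hw y]
        exact Set.mem_singleton _
      · intro y
        rw [central_of_Z (JZ w hw) y]
        exact Set.mem_singleton _
    show (∀ y : G, ⁅x, y⁆ ∈ aSer J 1) ∧ ∀ y : G, ⁅J x, y⁆ ∈ aSer J 1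
    exact ⟨fun y => mem1 _ (Z_lie x y), fun y => mem1 _ (Z_lie (J x) y)⟩
  · -- lower steps do not fill up
    intro s hs
    interval_cases s
    · intro h
      have hE : E1 ∈ aSer J 0 := h ▸ Set.mem_univ E1
      have hE' : E1 = 0 := hE
      have := congrArg Y1 hE'
      simp [E1] at this
    · intro h
      have hE : E1 ∈ aSer J 1 := h ▸ Set.mem_univ E1
      have hE' : (∀ y : G, ⁅E1, y⁆ ∈ aSer J 0) ∧ ∀ y : G, ⁅J E1, y⁆ ∈ aSer J 0 := hE
      have h0 : ⁅E1, E2⁆ = 0 := hE'.1 E2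
      have := congrArg Y3 h0
      simp [E1, E2] at this

end TH1Aux

end TH1Aux
/-- `T h1` admits abelian and non-abelian complex structures, and every
complex structure on `T h1` is 2-step nilpotent. -/
theorem tangent_h1_cpx_structures :
    (∃ J : TangentAlg H1 →ₗ[ℝ] TangentAlg H1, IsCpxStruct J ∧ IsAbelianCpx J) ∧
    (∃ J : TangentAlg H1 →ₗ[ℝ] TangentAlg H1, IsCpxStruct J ∧ ¬IsAbelianCpx J) ∧
    ∀ J : TangentAlg H1 →ₗ[ℝ] TangentAlg H1, IsCpxStruct J → IsNilpotentStepCpx J 2 :=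
  ⟨⟨TH1Aux.Jab, TH1Aux.Jab_cpx, TH1Aux.Jab_abelian⟩,
   ⟨TH1Aux.Jna, TH1Aux.Jna_cpx, TH1Aux.Jna_nonab⟩,
   TH1Aux.step2⟩
end

section
/- The cotangent Lie algebra T*h1 of the 3-dimensional Heisenberg Lie algebra admits complex structures, admits no abelian complex structure, and every complex structure on T*h1 is nilpotent, in fact 3-step nilpotent. -/
open LieAlgebra

attribute [local instance 100] LieRing.ofAssociativeRing

section CotH1Dev

noncomputable section

abbrev gT := CotangentAlg H1

namespace CotH1

def e1H : H1 := Sd.mk 1 0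
def e2H : H1 := Sd.mk 0 ![1,0]
def e3H : H1 := Sd.mk 0 ![0,1]

def E1 : gT := Sd.mk e1H 0
def E2 : gT := Sd.mk e2H 0
def E3 : gT := Sd.mk e3H 0
def F1 : gT := Sd.mk 0 (Solv3.D1 (endOf 0 0 1 0))
def F2 : gT := Sd.mk 0 (Solv3.D2 (endOf 0 0 1 0))
def F3 : gT := Sd.mk 0 (Solv3.D3 (endOf 0 0 1 0))

def c1 (x : gT) : ℝ := Sd.pr1 (Sd.pr1 x)
def c2 (x : gT) : ℝ := Sd.pr2 (Sd.pr1 x) 0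
def c3 (x : gT) : ℝ := Sd.pr2 (Sd.pr1 x) 1
def c4 (x : gT) : ℝ := Sd.pr2 x e1H
def c5 (x : gT) : ℝ := Sd.pr2 x e2H
def c6 (x : gT) : ℝ := Sd.pr2 x e3H

@[simp] lemma c1_add (x y : gT) : c1 (x + y) = c1 x + c1 y := rfl
@[simp] lemma c2_add (x y : gT) : c2 (x + y) = c2 x + c2 y := rfl
@[simp] lemma c3_add (x y : gT) : c3 (x + y) = c3 x + c3 y := rfl
@[simp] lemma c4_add (x y : gT) : c4 (x + y) = c4 x + c4 y := rfl
@[simp] lemma c5_add (x y : gT) : c5 (x + y) = c5 x + c5 y := rfl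
@[simp] lemma c6_add (x y : gT) : c6 (x + y) = c6 x + c6 y := rfl
@[simp] lemma c1_smul (t : ℝ) (x : gT) : c1 (t • x) = t * c1 x := rfl
@[simp] lemma c2_smul (t : ℝ) (x : gT) : c2 (t • x) = t * c2 x := rfl
@[simp] lemma c3_smul (t : ℝ) (x : gT) : c3 (t • x) = t * c3 x := rfl
@[simp] lemma c4_smul (t : ℝ) (x : gT) : c4 (t • x) = t * c4 x := rfl
@[simp] lemma c5_smul (t : ℝ) (x : gT) : c5 (t • x) = t * c5 x := rfl
@[simp] lemma c6_smul (t : ℝ) (x : gT) : c6 (t • x) = t * c6 x := rfl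
@[simp] lemma c1_neg (x : gT) : c1 (-x) = -c1 x := rfl
@[simp] lemma c2_neg (x : gT) : c2 (-x) = -c2 x := rfl
@[simp] lemma c3_neg (x : gT) : c3 (-x) = -c3 x := rfl
@[simp] lemma c4_neg (x : gT) : c4 (-x) = -c4 x := rfl
@[simp] lemma c5_neg (x : gT) : c5 (-x) = -c5 x := rfl
@[simp] lemma c6_neg (x : gT) : c6 (-x) = -c6 x := rfl
@[simp] lemma c1_sub (x y : gT) : c1 (x - y) = c1 x - c1 y := rfl
@[simp] lemma c2_sub (x y : gT) : c2 (x - y) = c2 x - c2 y := rfl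
@[simp] lemma c3_sub (x y : gT) : c3 (x - y) = c3 x - c3 y := rfl
@[simp] lemma c4_sub (x y : gT) : c4 (x - y) = c4 x - c4 y := rfl
@[simp] lemma c5_sub (x y : gT) : c5 (x - y) = c5 x - c5 y := rfl
@[simp] lemma c6_sub (x y : gT) : c6 (x - y) = c6 x - c6 y := rfl
@[simp] lemma c1_zero : c1 (0 : gT) = 0 := rfl
@[simp] lemma c2_zero : c2 (0 : gT) = 0 := rfl
@[simp] lemma c3_zero : c3 (0 : gT) = 0 := rfl
@[simp] lemma c4_zero : c4 (0 : gT) = 0 := rfl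
@[simp] lemma c5_zero : c5 (0 : gT) = 0 := rfl
@[simp] lemma c6_zero : c6 (0 : gT) = 0 := rfl

@[simp] lemma c1_E1 : c1 E1 = 1 := rfl
@[simp] lemma c2_E1 : c2 E1 = 0 := rfl
@[simp] lemma c3_E1 : c3 E1 = 0 := rfl
@[simp] lemma c4_E1 : c4 E1 = 0 := rfl
@[simp] lemma c5_E1 : c5 E1 = 0 := rfl
@[simp] lemma c6_E1 : c6 E1 = 0 := rfl
@[simp] lemma c1_E2 : c1 E2 = 0 := rfl
@[simp] lemma c2_E2 : c2 E2 = 1 := rfl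
@[simp] lemma c3_E2 : c3 E2 = 0 := rfl
@[simp] lemma c4_E2 : c4 E2 = 0 := rfl
@[simp] lemma c5_E2 : c5 E2 = 0 := rfl
@[simp] lemma c6_E2 : c6 E2 = 0 := rfl
@[simp] lemma c1_E3 : c1 E3 = 0 := rfl
@[simp] lemma c2_E3 : c2 E3 = 0 := rfl
@[simp] lemma c3_E3 : c3 E3 = 1 := rfl
@[simp] lemma c4_E3 : c4 E3 = 0 := rfl
@[simp] lemma c5_E3 : c5 E3 = 0 := rfl
@[simp] lemma c6_E3 : c6 E3 = 0 := rfl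
@[simp] lemma c1_F1 : c1 F1 = 0 := rfl
@[simp] lemma c2_F1 : c2 F1 = 0 := rfl
@[simp] lemma c3_F1 : c3 F1 = 0 := rfl
@[simp] lemma c4_F1 : c4 F1 = 1 := rfl
@[simp] lemma c5_F1 : c5 F1 = 0 := rfl
@[simp] lemma c6_F1 : c6 F1 = 0 := rfl
@[simp] lemma c1_F2 : c1 F2 = 0 := rfl
@[simp] lemma c2_F2 : c2 F2 = 0 := rfl
@[simp] lemma c3_F2 : c3 F2 = 0 := rfl
@[simp] lemma c4_F2 : c4 F2 = 0 := rfl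
@[simp] lemma c5_F2 : c5 F2 = 1 := rfl
@[simp] lemma c6_F2 : c6 F2 = 0 := rfl
@[simp] lemma c1_F3 : c1 F3 = 0 := rfl
@[simp] lemma c2_F3 : c2 F3 = 0 := rfl
@[simp] lemma c3_F3 : c3 F3 = 0 := rfl
@[simp] lemma c4_F3 : c4 F3 = 0 := rfl
@[simp] lemma c5_F3 : c5 F3 = 0 := rfl
@[simp] lemma c6_F3 : c6 F3 = 1 := rfl

/-- every element of H1 is a combination of the basis. -/
lemma H1_decomp (a : H1) :
    a = Sd.pr1 a • e1H + Sd.pr2 a 0 • e2H + Sd.pr2 a 1 • e3H := by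
  obtain ⟨s, w, rfl⟩ := Sd.mk_surj a
  simp only [Sd.pr1_mk, Sd.pr2_mk, e1H, e2H, e3H, Sd.smul_mk, Sd.mk_add_mk, Sd.mk_inj]
  constructor
  · simp
  · funext i; fin_cases i <;> simp

/-- A linear functional on `H1` is determined by its values on the basis. -/
lemma dual_apply (φ : Module.Dual ℝ H1) (a : H1) :
    φ a = Sd.pr1 a * φ e1H + Sd.pr2 a 0 * φ e2H + Sd.pr2 a 1 * φ e3H := by
  conv_lhs => rw [H1_decomp a]
  simp [smul_eq_mul]

@[simp] lemma D1_e1 : (Solv3.D1 (endOf 0 0 1 0)) e1H = 1 := rfl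
@[simp] lemma D1_e2 : (Solv3.D1 (endOf 0 0 1 0)) e2H = 0 := rfl
@[simp] lemma D1_e3 : (Solv3.D1 (endOf 0 0 1 0)) e3H = 0 := rfl
@[simp] lemma D2_e1 : (Solv3.D2 (endOf 0 0 1 0)) e1H = 0 := rfl
@[simp] lemma D2_e2 : (Solv3.D2 (endOf 0 0 1 0)) e2H = 1 := rfl
@[simp] lemma D2_e3 : (Solv3.D2 (endOf 0 0 1 0)) e3H = 0 := rfl
@[simp] lemma D3_e1 : (Solv3.D3 (endOf 0 0 1 0)) e1H = 0 := rfl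
@[simp] lemma D3_e2 : (Solv3.D3 (endOf 0 0 1 0)) e2H = 0 := rfl
@[simp] lemma D3_e3 : (Solv3.D3 (endOf 0 0 1 0)) e3H = 1 := rfl

lemma dual_ext (φ ψ : Module.Dual ℝ H1) (h1 : φ e1H = ψ e1H)
    (h2 : φ e2H = ψ e2H) (h3 : φ e3H = ψ e3H) : φ = ψ := by
  ext b
  rw [dual_apply φ, dual_apply ψ, h1, h2, h3]

/-- Expansion of an element of `gT` in the basis. -/
lemma expand (x : gT) :
    x = c1 x • E1 + c2 x • E2 + c3 x • E3 + c4 x • F1 + c5 x • F2 + c6 x • F3 := by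
  obtain ⟨a, φ, rfl⟩ := Sd.mk_surj x
  simp only [E1, E2, E3, F1, F2, F3, Sd.smul_mk, Sd.mk_add_mk, Sd.mk_inj,
    c1, c2, c3, c4, c5, c6, Sd.pr1_mk, Sd.pr2_mk]
  constructor
  · rw [smul_zero, smul_zero, smul_zero, add_zero, add_zero, add_zero]
    exact H1_decomp a
  · rw [smul_zero, smul_zero, smul_zero, zero_add, zero_add, zero_add]
    refine dual_ext _ _ ?_ ?_ ?_ <;>
      simp [LinearMap.add_apply, LinearMap.smul_apply, smul_eq_mul]

lemma ext6 {x y : gT} (h1 : c1 x = c1 y) (h2 : c2 x = c2 y) (h3 : c3 x = c3 y)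
    (h4 : c4 x = c4 y) (h5 : c5 x = c5 y) (h6 : c6 x = c6 y) : x = y := by
  rw [expand x, expand y, h1, h2, h3, h4, h5, h6]

-- bracket coordinates
@[simp] lemma c1_lie (x y : gT) : c1 ⁅x, y⁆ = 0 := by
  show (⁅Sd.pr1 (Sd.pr1 x), Sd.pr1 (Sd.pr1 y)⁆ : ℝ) = 0
  rw [Ring.lie_def]; ring

@[simp] lemma c2_lie (x y : gT) : c2 ⁅x, y⁆ = 0 := by
  show ((rep2 (endOf 0 0 1 0)) (Sd.pr1 (Sd.pr1 x)) (Sd.pr2 (Sd.pr1 y))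
      - (rep2 (endOf 0 0 1 0)) (Sd.pr1 (Sd.pr1 y)) (Sd.pr2 (Sd.pr1 x))) 0 = 0
  simp [rep2, endOf]

@[simp] lemma c3_lie (x y : gT) : c3 ⁅x, y⁆ = c1 x * c2 y - c2 x * c1 y := by
  show ((rep2 (endOf 0 0 1 0)) (Sd.pr1 (Sd.pr1 x)) (Sd.pr2 (Sd.pr1 y))
      - (rep2 (endOf 0 0 1 0)) (Sd.pr1 (Sd.pr1 y)) (Sd.pr2 (Sd.pr1 x))) 1 = _
  simp [rep2, endOf, c1, c2]
  ring

lemma adH (a b : H1) : (⁅a, b⁆ : H1) =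
    Sd.mk 0 ![0, Sd.pr1 a * Sd.pr2 b 0 - Sd.pr1 b * Sd.pr2 a 0] := by
  show Sd.mk ⁅Sd.pr1 a, Sd.pr1 b⁆ _ = _
  simp only [Sd.mk_inj]
  constructor
  · rw [Ring.lie_def]; ring
  · funext i
    fin_cases i <;> simp [rep2, endOf] <;> ring

@[simp] lemma c4_lie (x y : gT) : c4 ⁅x, y⁆ = c2 x * c6 y - c2 y * c6 x := by
  show ((coadRep H1) (Sd.pr1 x) (Sd.pr2 y) - (coadRep H1) (Sd.pr1 y) (Sd.pr2 x)) e1H = _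
  simp only [LinearMap.sub_apply, dualRep_apply, LieAlgebra.ad_apply, adH]
  rw [dual_apply (Sd.pr2 y), dual_apply (Sd.pr2 x)]
  simp [e1H, c2, c6]
  try ring

@[simp] lemma c5_lie (x y : gT) : c5 ⁅x, y⁆ = c6 x * c1 y - c1 x * c6 y := by
  show ((coadRep H1) (Sd.pr1 x) (Sd.pr2 y) - (coadRep H1) (Sd.pr1 y) (Sd.pr2 x)) e2H = _
  simp only [LinearMap.sub_apply, dualRep_apply, LieAlgebra.ad_apply, adH]
  rw [dual_apply (Sd.pr2 y), dual_apply (Sd.pr2 x)]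
  simp [e2H, c1, c6]
  try ring

@[simp] lemma c6_lie (x y : gT) : c6 ⁅x, y⁆ = 0 := by
  show ((coadRep H1) (Sd.pr1 x) (Sd.pr2 y) - (coadRep H1) (Sd.pr1 y) (Sd.pr2 x)) e3H = 0
  simp only [LinearMap.sub_apply, dualRep_apply, LieAlgebra.ad_apply, adH]
  rw [dual_apply (Sd.pr2 y), dual_apply (Sd.pr2 x)]
  simp [e3H]

end CotH1
end
end CotH1Dev
section MainDev
noncomputable section
namespace CotH1

/-- The center of `gT`. -/
def Z (x : gT) : Prop := c1 x = 0 ∧ c2 x = 0 ∧ c6 x = 0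

lemma zZ : Z (0 : gT) := ⟨rfl, rfl, rfl⟩

lemma zbr {x : gT} (h : Z x) (y : gT) : ⁅x, y⁆ = 0 := by
  apply ext6 <;> simp [h.1, h.2.1, h.2.2]

lemma zofbr {x : gT} (h : ∀ y : gT, ⁅x, y⁆ = 0) : Z x := by
  have h1 := congrArg c3 (h E2)
  have h2 := congrArg c3 (h E1)
  have h3 := congrArg c4 (h E2)
  simp at h1 h2 h3
  exact ⟨h1, h2, h3⟩

lemma zlie (x y : gT) : Z ⁅x, y⁆ := ⟨c1_lie x y, c2_lie x y, c6_lie x y⟩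

lemma zexp {x : gT} (h : Z x) : x = c3 x • E3 + c4 x • F1 + c5 x • F2 := by
  conv_lhs => rw [expand x]
  rw [h.1, h.2.1, h.2.2]
  simp

lemma zE3 : Z E3 := ⟨rfl, rfl, rfl⟩
lemma zF1 : Z F1 := ⟨rfl, rfl, rfl⟩
lemma zF2 : Z F2 := ⟨rfl, rfl, rfl⟩

lemma lE1E2 : ⁅E1, E2⁆ = E3 := by apply ext6 <;> simp
lemma lE2F3 : ⁅E2, F3⁆ = F1 := by apply ext6 <;> simp
lemma lF3E1 : ⁅F3, E1⁆ = F2 := by apply ext6 <;> simp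

lemma E1ne : (E1 : gT) ≠ 0 := by
  intro h
  have := congrArg c1 h
  simp at this

lemma E3ne : (E3 : gT) ≠ 0 := by
  intro h
  have := congrArg c3 h
  simp at this

/-- No complex structure maps the center into itself. -/
lemma noAllZ (J : gT →ₗ[ℝ] gT) (hJ2 : ∀ x, J (J x) = -x)
    (h3 : Z (J E3)) (h4 : Z (J F1)) (h5 : Z (J F2)) : False := by
  have key : ∀ v : gT, Z (J v) →
      J (J v) = c3 (J v) • J E3 + c4 (J v) • J F1 + c5 (J v) • J F2 := by
    intro v hv
    conv_lhs => rw [zexp hv]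
    simp
  have mk9 : ∀ v : gT, Z (J v) →
      (c3 (J v) * c3 (J E3) + c4 (J v) * c3 (J F1) + c5 (J v) * c3 (J F2) = c3 (-v)) ∧
      (c3 (J v) * c4 (J E3) + c4 (J v) * c4 (J F1) + c5 (J v) * c4 (J F2) = c4 (-v)) ∧
      (c3 (J v) * c5 (J E3) + c4 (J v) * c5 (J F1) + c5 (J v) * c5 (J F2) = c5 (-v)) := by
    intro v hv
    have h := (key v hv).symm.trans (hJ2 v)
    refine ⟨?_, ?_, ?_⟩
    · have := congrArg c3 h; simpa using this
    · have := congrArg c4 h; simpa using this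
    · have := congrArg c5 h; simpa using this
  obtain ⟨a1, a2, a3⟩ := mk9 E3 h3
  obtain ⟨b1, b2, b3⟩ := mk9 F1 h4
  obtain ⟨d1, d2, d3⟩ := mk9 F2 h5
  simp only [c3_neg, c4_neg, c5_neg, c3_E3, c4_E3, c5_E3, c3_F1, c4_F1, c5_F1,
    c3_F2, c4_F2, c5_F2] at a1 a2 a3 b1 b2 b3 d1 d2 d3
  set M : Matrix (Fin 3) (Fin 3) ℝ :=
    !![c3 (J E3), c3 (J F1), c3 (J F2);
       c4 (J E3), c4 (J F1), c4 (J F2);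
       c5 (J E3), c5 (J F1), c5 (J F2)] with hM
  have hMM : M * M = -1 := by
    ext i j
    fin_cases i <;> fin_cases j <;>
      simp [hM, Matrix.mul_apply, Fin.sum_univ_three, Matrix.neg_apply,
        Matrix.one_apply] <;>
      linarith [a1, a2, a3, b1, b2, b3, d1, d2, d3]
  have hdet := congrArg Matrix.det hMM
  rw [Matrix.det_mul] at hdet
  rw [show (-1 : Matrix (Fin 3) (Fin 3) ℝ) = -(1 : Matrix (Fin 3) (Fin 3) ℝ) from rfl,
    Matrix.det_neg] at hdet
  simp at hdet
  nlinarith [hdet, sq_nonneg (M.det)]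

lemma aSer_zero (J : gT →ₗ[ℝ] gT) : aSer J 0 = {0} := rfl
lemma aSer_succ (J : gT →ₗ[ℝ] gT) (l : ℕ) : aSer J (l + 1) =
    {x | (∀ y : gT, ⁅x, y⁆ ∈ aSer J l) ∧ ∀ y : gT, ⁅J x, y⁆ ∈ aSer J l} := rfl

lemma mem_a1_iff (J : gT →ₗ[ℝ] gT) (x : gT) :
    x ∈ aSer J 1 ↔ Z x ∧ Z (J x) := by
  have h : aSer J 1 =
      {x : gT | (∀ y : gT, ⁅x, y⁆ ∈ aSer J 0) ∧ ∀ y : gT, ⁅J x, y⁆ ∈ aSer J 0} :=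
    aSer_succ J 0
  rw [h]
  simp only [aSer_zero, Set.mem_setOf_eq, Set.mem_singleton_iff]
  constructor
  · rintro ⟨h1, h2⟩; exact ⟨zofbr h1, zofbr h2⟩
  · rintro ⟨h1, h2⟩; exact ⟨zbr h1, zbr h2⟩

lemma z_mem_a2 (J : gT →ₗ[ℝ] gT)
    (hN : ∀ x y : gT, ⁅J x, J y⁆ - ⁅x, y⁆ - J ⁅J x, y⁆ - J ⁅x, J y⁆ = 0)
    {x : gT} (hx : Z x) : x ∈ aSer J 2 := by
  have h2 : aSer J 2 =
      {x : gT | (∀ y : gT, ⁅x, y⁆ ∈ aSer J 1) ∧ ∀ y : gT, ⁅J x, y⁆ ∈ aSer J 1} :=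
    aSer_succ J 1
  rw [h2]
  refine ⟨fun y => ?_, fun y => ?_⟩
  · rw [zbr hx y, mem_a1_iff]
    exact ⟨zZ, by rw [map_zero]; exact zZ⟩
  · rw [mem_a1_iff]
    refine ⟨zlie _ _, ?_⟩
    have h := hN x y
    rw [zbr hx y, zbr hx (J y)] at h
    simp only [map_zero, sub_zero] at h
    rw [sub_eq_zero] at h
    rw [← h]
    exact zlie _ _

lemma a3_univ (J : gT →ₗ[ℝ] gT)
    (hN : ∀ x y : gT, ⁅J x, J y⁆ - ⁅x, y⁆ - J ⁅J x, y⁆ - J ⁅x, J y⁆ = 0) :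
    aSer J 3 = Set.univ := by
  rw [Set.eq_univ_iff_forall]
  intro x
  have h3 : aSer J 3 =
      {x : gT | (∀ y : gT, ⁅x, y⁆ ∈ aSer J 2) ∧ ∀ y : gT, ⁅J x, y⁆ ∈ aSer J 2} :=
    aSer_succ J 2
  rw [h3]
  exact ⟨fun y => z_mem_a2 J hN (zlie x y), fun y => z_mem_a2 J hN (zlie _ y)⟩

lemma a0_ne (J : gT →ₗ[ℝ] gT) : aSer J 0 ≠ Set.univ := by
  rw [aSer_zero]
  intro h
  exact E1ne (by have : E1 ∈ ({0} : Set gT) := h ▸ Set.mem_univ E1; simpa using this)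

lemma a1_ne (J : gT →ₗ[ℝ] gT) : aSer J 1 ≠ Set.univ := by
  intro h
  have hE1 : E1 ∈ aSer J 1 := h ▸ Set.mem_univ E1
  have := ((mem_a1_iff J E1).1 hE1).1.1
  simp at this

lemma a2_ne (J : gT →ₗ[ℝ] gT) (hJ2 : ∀ x, J (J x) = -x) :
    aSer J 2 ≠ Set.univ := by
  intro h
  have mem : ∀ x : gT, x ∈ aSer J 2 := fun x => h ▸ Set.mem_univ x
  have key : ∀ x y : gT, ⁅x, y⁆ ∈ aSer J 1 := by
    intro x y
    have := mem x
    rw [aSer_succ J 1] at this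
    exact this.1 y
  have h3 : Z (J E3) := ((mem_a1_iff J E3).1 (lE1E2 ▸ key E1 E2)).2
  have h4 : Z (J F1) := ((mem_a1_iff J F1).1 (lE2F3 ▸ key E2 F3)).2
  have h5 : Z (J F2) := ((mem_a1_iff J F2).1 (lF3E1 ▸ key F3 E1)).2
  exact noAllZ J hJ2 h3 h4 h5

end CotH1
end
end MainDev
section JstdDev
noncomputable section
namespace CotH1

/-- The standard complex structure on `gT`. -/
def Jstd : gT →ₗ[ℝ] gT where
  toFun x := c1 x • E2 - c2 x • E1 + c6 x • E3 - c3 x • F3 + c4 x • F2 - c5 x • F1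
  map_add' x y := by
    simp only [c1_add, c2_add, c3_add, c4_add, c5_add, c6_add]
    module
  map_smul' t x := by
    simp only [c1_smul, c2_smul, c3_smul, c4_smul, c5_smul, c6_smul, RingHom.id_apply]
    module

lemma Jstd_apply (x : gT) : Jstd x =
    c1 x • E2 - c2 x • E1 + c6 x • E3 - c3 x • F3 + c4 x • F2 - c5 x • F1 := rfl

@[simp] lemma c1_J (x : gT) : c1 (Jstd x) = -c2 x := by rw [Jstd_apply]; simp
@[simp] lemma c2_J (x : gT) : c2 (Jstd x) = c1 x := by rw [Jstd_apply]; simp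
@[simp] lemma c3_J (x : gT) : c3 (Jstd x) = c6 x := by rw [Jstd_apply]; simp
@[simp] lemma c4_J (x : gT) : c4 (Jstd x) = -c5 x := by rw [Jstd_apply]; simp
@[simp] lemma c5_J (x : gT) : c5 (Jstd x) = c4 x := by rw [Jstd_apply]; simp
@[simp] lemma c6_J (x : gT) : c6 (Jstd x) = -c3 x := by rw [Jstd_apply]; simp

lemma Jstd_cpx : IsCpxStruct Jstd := by
  constructor
  · intro x
    apply ext6 <;> simp
  · intro x y
    apply ext6 <;> simp <;> ring

end CotH1
end
end JstdDev

/-- `T*h1` admits complex structures, none of them abelian, and every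
complex structure on `T*h1` is nilpotent, in fact 3-step nilpotent. -/
theorem cotangent_h1_cpx_structures :
    (∃ J : CotangentAlg H1 →ₗ[ℝ] CotangentAlg H1, IsCpxStruct J) ∧
    (¬∃ J : CotangentAlg H1 →ₗ[ℝ] CotangentAlg H1, IsCpxStruct J ∧ IsAbelianCpx J) ∧
    ∀ J : CotangentAlg H1 →ₗ[ℝ] CotangentAlg H1, IsCpxStruct J →
      IsNilpotentCpx J ∧ IsNilpotentStepCpx J 3 := by
  open CotH1 in
  refine ⟨⟨Jstd, Jstd_cpx⟩, ?_, ?_⟩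
  · rintro ⟨J, ⟨hJ2, _⟩, hab⟩
    have hZ : ∀ v : CotangentAlg H1, Z v → Z (J v) := by
      intro v hv
      apply zofbr
      intro y
      have hy : y = J (-(J y)) := by rw [map_neg, hJ2, neg_neg]
      rw [hy, hab v (-(J y)), zbr hv]
    exact noAllZ J hJ2 (hZ E3 zE3) (hZ F1 zF1) (hZ F2 zF2)
  · rintro J ⟨hJ2, hN⟩
    refine ⟨⟨3, a3_univ J hN⟩, a3_univ J hN, ?_⟩
    intro s hs
    interval_cases s
    · exact a0_ne J
    · exact a1_ne J
    · exact a2_ne J hJ2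
end

section
/- Let h be a real Lie algebra and π a representation of h on V with dim V = dim h. If J is a totally real complex structure on T_π h = h ⋉_π V, then the 2-form ω_J on the dual semidirect product T_{π*} h = h ⋉_{π*} V* defined by ω_J(x + u, y + v) = v(Jx) − u(Jy) (for x,y ∈ h and u,v ∈ V*) is a lagrangian symplectic structure; moreover J ↦ ω_J gives a one-to-one correspondence between totally real complex structures on T_π h and lagrangian symplectic structures on T_{π*} h. -/
open LieAlgebra

attribute [local instance 100] LieRing.ofAssociativeRing

/-- The 2-form `ω_J` on `h ⋉_{π*} V*` induced by a totally real complex structure `J` on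
`h ⋉_π V`: `ω_J(x + u, y + v) = v(Jx) - u(Jy)`. -/
noncomputable def omegaJ {h V : Type*} [LieRing h] [LieAlgebra ℝ h]
    [AddCommGroup V] [Module ℝ V] (π : h →ₗ⁅ℝ⁆ Module.End ℝ V)
    (J : Sd π →ₗ[ℝ] Sd π) (p q : Sd (dualRep π)) : ℝ :=
  Sd.pr2 q (Sd.pr2 (J (Sd.mk (Sd.pr1 p) 0))) - Sd.pr2 p (Sd.pr2 (J (Sd.mk (Sd.pr1 q) 0)))

section AuxCorr

variable {h V : Type*} [LieRing h] [LieAlgebra ℝ h] [AddCommGroup V] [Module ℝ V]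
variable (π : h →ₗ⁅ℝ⁆ Module.End ℝ V)

/-- The cocycle condition on `ψ : h → V`. -/
def CondA (ψ : h → V) : Prop := ∀ x y : h, ψ ⁅x, y⁆ = π x (ψ y) - π y (ψ x)

@[simp] lemma Sd.zero_def : (0 : Sd π) = Sd.mk 0 0 := rfl

lemma Sd.sub_mk (x y : h) (u v : V) :
    (Sd.mk (π := π) x u) - (Sd.mk y v) = Sd.mk (x - y) (u - v) := rfl

/-- The totally real almost complex structure associated to a linear iso `e : h ≃ V`. -/
noncomputable def mkJ (e : h ≃ₗ[ℝ] V) : Sd π →ₗ[ℝ] Sd π where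
  toFun p := Sd.mk (-(e.symm (Sd.pr2 p))) (e (Sd.pr1 p))
  map_add' p q := by
    obtain ⟨x, u, rfl⟩ := Sd.mk_surj p; obtain ⟨y, v, rfl⟩ := Sd.mk_surj q
    simp [map_add]
    abel
  map_smul' t p := by
    obtain ⟨x, u, rfl⟩ := Sd.mk_surj p
    simp

@[simp] lemma mkJ_apply (e : h ≃ₗ[ℝ] V) (x : h) (u : V) :
    mkJ π e (Sd.mk x u) = Sd.mk (-(e.symm u)) (e x) := rfl

lemma mkJ_cpx (e : h ≃ₗ[ℝ] V) (hA : CondA π e) : IsCpxStruct (mkJ π e) := by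
  constructor
  · intro p
    obtain ⟨x, u, rfl⟩ := Sd.mk_surj p
    simp
  · intro p q
    obtain ⟨x, u, rfl⟩ := Sd.mk_surj p; obtain ⟨y, v, rfl⟩ := Sd.mk_surj q
    have key : ∀ a b : h, e ⁅a, b⁆ = π a (e b) - π b (e a) := hA
    rw [Sd.ext_iff]
    constructor
    · -- h-component
      apply e.injective
      simp only [mkJ_apply, Sd.lie_mk, Sd.pr1_mk, Sd.pr2_mk, sub_eq_add_neg, Sd.mk_add_mk,
        Sd.neg_mk, Sd.pr1_mk, map_add, map_neg, LinearEquiv.apply_symm_apply, map_zero,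
        Sd.zero_def]
      rw [key, key]
      simp only [map_neg, map_sub, map_add, LinearEquiv.apply_symm_apply, neg_neg,
        LinearMap.neg_apply, LinearMap.sub_apply, LinearMap.add_apply]
      abel
    · -- V-component
      simp only [mkJ_apply, Sd.lie_mk, Sd.pr1_mk, Sd.pr2_mk, sub_eq_add_neg, Sd.mk_add_mk,
        Sd.neg_mk, Sd.pr2_mk, Sd.zero_def]
      rw [key, key]
      simp only [map_neg, map_sub, map_add, LinearEquiv.apply_symm_apply,
        LinearMap.neg_apply, LinearMap.sub_apply, lie_neg, neg_lie, map_zero]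
      abel

lemma mkJ_totallyReal (e : h ≃ₗ[ℝ] V) : IsTotallyReal π (mkJ π e) := by
  apply le_antisymm
  · rintro p ⟨q, hq, rfl⟩
    obtain ⟨x, u, rfl⟩ := Sd.mk_surj q
    have hu : u = 0 := hq
    subst hu
    show Sd.pr1 _ = 0
    simp
  · rintro p hp
    obtain ⟨x, u, rfl⟩ := Sd.mk_surj p
    have hx : x = 0 := hp
    subst hx
    refine ⟨Sd.mk (e.symm u) 0, rfl, ?_⟩
    simp

lemma omegaJ_mkJ (e : h ≃ₗ[ℝ] V) (p q : Sd (dualRep π)) :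
    omegaJ π (mkJ π e) p q = Sd.pr2 q (e (Sd.pr1 p)) - Sd.pr2 p (e (Sd.pr1 q)) := by
  simp [omegaJ]

/-- Antisymmetry of a symplectic form. -/
lemma IsSymplForm.skew {g : Type*} [LieRing g] [LieAlgebra ℝ g] {ω : g → g → ℝ}
    (hω : IsSymplForm ω) (p q : g) : ω p q = -ω q p := by
  obtain ⟨h1, h2, h3, _, _⟩ := hω
  have := h3 (p + q)
  have e1 : ω (p + q) (p + q) = ω p p + ω p q + ω q p + ω q q := by
    rw [(h2 (p + q)).map_add, (h1 p).map_add, (h1 q).map_add]; ring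
  rw [this] at e1
  rw [h3 p, h3 q] at e1
  linarith

lemma omega_lagSympl (e : h ≃ₗ[ℝ] V) (hA : CondA π e) :
    IsLagrangianSympl (dualRep π)
      (fun p q => Sd.pr2 q (e (Sd.pr1 p)) - Sd.pr2 p (e (Sd.pr1 q))) := by
  refine ⟨⟨?_, ?_, ?_, ?_, ?_⟩, ?_, ?_⟩
  · intro p
    constructor
    · intro q r
      obtain ⟨x, u, rfl⟩ := Sd.mk_surj q; obtain ⟨y, v, rfl⟩ := Sd.mk_surj r
      obtain ⟨z, w, rfl⟩ := Sd.mk_surj p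
      simp [map_add, LinearMap.add_apply]; ring
    · intro t q
      obtain ⟨x, u, rfl⟩ := Sd.mk_surj q; obtain ⟨z, w, rfl⟩ := Sd.mk_surj p
      simp [map_smul, LinearMap.smul_apply, smul_eq_mul]; ring
  · intro p
    constructor
    · intro q r
      obtain ⟨x, u, rfl⟩ := Sd.mk_surj q; obtain ⟨y, v, rfl⟩ := Sd.mk_surj r
      obtain ⟨z, w, rfl⟩ := Sd.mk_surj p
      simp [map_add, LinearMap.add_apply]; ring
    · intro t q
      obtain ⟨x, u, rfl⟩ := Sd.mk_surj q; obtain ⟨z, w, rfl⟩ := Sd.mk_surj p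
      simp [map_smul, LinearMap.smul_apply, smul_eq_mul]; ring
  · intro p; ring
  · intro p hp
    obtain ⟨x, u, rfl⟩ := Sd.mk_surj p
    have h1 : e x = 0 := by
      rw [← Module.forall_dual_apply_eq_zero_iff ℝ]
      intro φ
      have := hp (Sd.mk 0 φ)
      simpa using this
    have h2 : u = 0 := by
      ext v
      have := hp (Sd.mk (e.symm v) 0)
      simp [h1] at this
      simpa [this] using (map_zero u).symm
    have h3 : x = 0 := by
      have := e.map_eq_zero_iff.mp h1
      exact this
    simp [h2, h3]
  · intro p q r
    obtain ⟨x, u, rfl⟩ := Sd.mk_surj p; obtain ⟨y, v, rfl⟩ := Sd.mk_surj q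
    obtain ⟨z, w, rfl⟩ := Sd.mk_surj r
    simp only [Sd.lie_mk, Sd.pr1_mk, Sd.pr2_mk]
    rw [hA x y, hA y z, hA z x]
    simp only [map_sub, LinearMap.sub_apply, dualRep_apply]
    ring
  · intro x y; simp
  · intro u v; simp

/-- Extraction of the linear iso from a totally real complex structure. -/
lemma extract_e (J : Sd π →ₗ[ℝ] Sd π) (hJ : IsCpxStruct J) (hTR : IsTotallyReal π J) :
    ∃ e : h ≃ₗ[ℝ] V, CondA π e ∧ J = mkJ π e := by
  obtain ⟨hJ2, hN⟩ := hJ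
  -- pr1 (J (mk x 0)) = 0
  have mem_h : ∀ x : h, Sd.mk (π := π) x 0 ∈ Sd.hPart π := fun x => rfl
  have hJh : ∀ x : h, Sd.pr1 (J (Sd.mk x 0)) = 0 := by
    intro x
    have : J (Sd.mk x 0) ∈ Sd.vPart π := by
      rw [← hTR]; exact ⟨Sd.mk x 0, mem_h x, rfl⟩
    exact this
  -- ψ as a linear map
  set ψ : h →ₗ[ℝ] V :=
    { toFun := fun x => Sd.pr2 (J (Sd.mk x 0))
      map_add' := by
        intro x y
        show Sd.pr2 (J (Sd.mk (x + y) 0)) = Sd.pr2 (J (Sd.mk x 0)) + Sd.pr2 (J (Sd.mk y 0))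
        have h1 : Sd.mk (π := π) (x + y) 0 = Sd.mk x 0 + Sd.mk y 0 := by simp
        rw [h1, map_add]; rfl
      map_smul' := by
        intro t x
        show Sd.pr2 (J (Sd.mk (t • x) 0)) = t • Sd.pr2 (J (Sd.mk x 0))
        have h1 : Sd.mk (π := π) (t • x) 0 = t • Sd.mk x 0 := by simp
        rw [h1, map_smul]; rfl } with hψdef
  have Jmk : ∀ x : h, J (Sd.mk x 0) = Sd.mk 0 (ψ x) := by
    intro x
    rw [Sd.ext_iff]
    exact ⟨hJh x, rfl⟩
  -- ψ bijective
  have hinj : Function.Injective ψ := by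
    intro x y hxy
    have : J (Sd.mk x 0) = J (Sd.mk y 0) := by rw [Jmk, Jmk, hxy]
    have hJinj : Function.Injective J := by
      intro p q hpq
      have := congrArg J hpq
      rw [hJ2, hJ2] at this
      exact neg_injective this
    have := hJinj this
    simpa [Sd.mk_inj] using this
  have hsurj : Function.Surjective ψ := by
    intro v
    have : Sd.mk (π := π) 0 v ∈ Sd.vPart π := rfl
    rw [← hTR] at this
    obtain ⟨p, hp, hJp⟩ := this
    obtain ⟨x, u, rfl⟩ := Sd.mk_surj p
    have hu : u = 0 := hp
    subst hu
    refine ⟨x, ?_⟩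
    have := congrArg Sd.pr2 hJp
    show Sd.pr2 (J (Sd.mk x 0)) = v
    simpa using this
  set e := LinearEquiv.ofBijective ψ ⟨hinj, hsurj⟩ with he
  have heapp : ∀ x, e x = ψ x := fun _ => rfl
  -- J (mk 0 v) = mk (-(e.symm v)) 0
  have Jmk2 : ∀ v : V, J (Sd.mk 0 v) = Sd.mk (-(e.symm v)) 0 := by
    intro v
    have h1 : J (Sd.mk 0 (ψ (e.symm v))) = Sd.mk (-(e.symm v)) 0 := by
      have := hJ2 (Sd.mk (e.symm v) 0)
      rw [Jmk] at this
      rw [this]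
      simp
    have h2 : ψ (e.symm v) = v := by
      have := e.apply_symm_apply v
      rwa [heapp] at this
    rwa [h2] at h1
  have hJeq : J = mkJ π e := by
    apply LinearMap.ext
    intro p
    obtain ⟨x, u, rfl⟩ := Sd.mk_surj p
    have : Sd.mk (π := π) x u = Sd.mk x 0 + Sd.mk 0 u := by simp
    rw [this, map_add, Jmk, Jmk2, map_add, mkJ_apply, mkJ_apply]
    simp [heapp]
  refine ⟨e, ?_, hJeq⟩
  -- condition A from Nijenhuis
  intro x y
  have hN' := hN (Sd.mk x 0) (Sd.mk y 0)
  rw [Jmk x, Jmk y] at hN'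
  simp only [Sd.lie_mk, Sd.pr1_mk, Sd.pr2_mk, zero_lie, lie_zero, map_zero,
    LinearMap.zero_apply, LinearMap.map_zero, zero_sub, sub_zero] at hN'
  rw [Jmk2, Jmk2] at hN'
  rw [Sd.sub_mk, Sd.sub_mk, Sd.sub_mk, Sd.zero_def, Sd.mk_inj] at hN'
  obtain ⟨hN1, -⟩ := hN'
  have h5 : (0:h) - ⁅x, y⁆ - -e.symm (-(π y) (ψ x)) - -e.symm ((π x) (ψ y)) =
      (e.symm ((π x) (ψ y)) - e.symm ((π y) (ψ x))) - ⁅x, y⁆ := by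
    rw [map_neg]; abel
  rw [h5] at hN1
  have h8 := (sub_eq_zero.mp hN1).symm
  show e ⁅x, y⁆ = π x (e y) - π y (e x)
  rw [h8, map_sub, e.apply_symm_apply, e.apply_symm_apply]
  rfl

set_option maxHeartbeats 4000000 in
lemma omega_to_e [FiniteDimensional ℝ h] [FiniteDimensional ℝ V]
    (hdim : Module.finrank ℝ V = Module.finrank ℝ h)
    (ω : Sd (dualRep π) → Sd (dualRep π) → ℝ)
    (hω : IsLagrangianSympl (dualRep π) ω) :
    ∃ e : h ≃ₗ[ℝ] V, CondA π e ∧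
      ω = fun p q : Sd (dualRep π) => Sd.pr2 q (e (Sd.pr1 p)) - Sd.pr2 p (e (Sd.pr1 q)) := by
  obtain ⟨hS, hlagH, hlagV⟩ := hω
  have hskew := hS.skew
  obtain ⟨hlin1, hlin2, halt, hnd, hcl⟩ := hS

  -- the linear map Ψ : h → V**
  set Ψ : h →ₗ[ℝ] Module.Dual ℝ (Module.Dual ℝ V) :=
    { toFun := fun x =>
        { toFun := fun φ => ω (Sd.mk x 0) (Sd.mk 0 φ)
          map_add' := by
            intro φ φ'
            show ω (Sd.mk x 0) (Sd.mk 0 (φ + φ')) = _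
            have h1 : Sd.mk (π := dualRep π) 0 (φ + φ') = Sd.mk 0 φ + Sd.mk 0 φ' := by simp
            rw [h1]; exact (hlin1 _).map_add _ _
          map_smul' := by
            intro t φ
            show ω (Sd.mk x 0) (Sd.mk 0 (t • φ)) = _
            have h1 : Sd.mk (π := dualRep π) 0 (t • φ) = t • Sd.mk 0 φ := by simp
            rw [h1]; exact (hlin1 _).map_smul _ _ }
      map_add' := by
        intro x y
        ext φ
        show ω (Sd.mk (x + y) 0) (Sd.mk 0 φ) = _
        have h1 : Sd.mk (π := dualRep π) (x + y) 0 = Sd.mk x 0 + Sd.mk y 0 := by simp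
        rw [h1]
        exact (hlin2 _).map_add _ _
      map_smul' := by
        intro t x
        ext φ
        show ω (Sd.mk (t • x) 0) (Sd.mk 0 φ) = _
        have h1 : Sd.mk (π := dualRep π) (t • x) 0 = t • Sd.mk x 0 := by simp
        rw [h1]
        exact (hlin2 _).map_smul _ _ } with hΨ
  set ψ : h →ₗ[ℝ] V := (Module.evalEquiv ℝ V).symm.toLinearMap ∘ₗ Ψ with hψ
  have keyev : ∀ (x : h) (φ : Module.Dual ℝ V), φ (ψ x) = ω (Sd.mk x 0) (Sd.mk 0 φ) := by
    intro x φ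
    show φ ((Module.evalEquiv ℝ V).symm (Ψ x)) = ω (Sd.mk x 0) (Sd.mk 0 φ)
    rw [Module.apply_evalEquiv_symm_apply]
    rfl
  -- decomposition of ω
  have hdec : ∀ (x y : h) (u v : Module.Dual ℝ V),
      ω (Sd.mk x u) (Sd.mk y v) = ω (Sd.mk x 0) (Sd.mk 0 v) - ω (Sd.mk y 0) (Sd.mk 0 u) := by
    intro x y u v
    have h1 : Sd.mk (π := dualRep π) x u = Sd.mk x 0 + Sd.mk 0 u := by simp
    have h2 : Sd.mk (π := dualRep π) y v = Sd.mk y 0 + Sd.mk 0 v := by simp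
    rw [h1, h2, (hlin2 _).map_add]
    rw [(hlin1 _).map_add, (hlin1 _).map_add]
    rw [hlagH, hlagV]
    rw [hskew (Sd.mk 0 u) (Sd.mk y 0)]
    ring
  -- ψ is injective
  have hinj : Function.Injective ψ := by
    rw [injective_iff_map_eq_zero]
    intro x hx
    have hz : Sd.mk (π := dualRep π) x 0 = 0 := by
      apply hnd
      intro q
      obtain ⟨y, v, rfl⟩ := Sd.mk_surj q
      rw [hdec x y 0 v]
      rw [← keyev, hx, map_zero]
      have h0 : Sd.mk (π := dualRep π) 0 (0 : Module.Dual ℝ V) = 0 := rfl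
      rw [h0, (hlin1 _).map_zero, sub_zero]
    have := congrArg Sd.pr1 hz
    simpa using this
  -- ψ is surjective
  have hsurj : Function.Surjective ψ := by
    rw [← LinearMap.range_eq_top]
    apply Submodule.eq_top_of_finrank_eq
    rw [LinearMap.finrank_range_of_inj hinj, hdim]
  set e := LinearEquiv.ofBijective ψ ⟨hinj, hsurj⟩ with he
  have heapp : ∀ x : h, e x = ψ x := fun _ => rfl
  -- the cocycle condition
  have hA : CondA π e := by
    intro x y
    show e ⁅x, y⁆ = π x (e y) - π y (e x)
    rw [heapp, heapp, heapp]
    have hsub : ψ ⁅x, y⁆ - (π x (ψ y) - π y (ψ x)) = 0 := by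
      rw [← Module.forall_dual_apply_eq_zero_iff ℝ]
      intro w
      have hc := hcl (Sd.mk x 0) (Sd.mk y 0) (Sd.mk 0 w)
      simp only [Sd.lie_mk, Sd.pr1_mk, Sd.pr2_mk, map_zero, LinearMap.zero_apply,
        LinearMap.map_zero, sub_zero, zero_sub, lie_zero, zero_lie] at hc
      -- hc : ω (mk ⁅x,y⁆ 0) (mk 0 w) + ω (mk 0 (dualRep π y w)) (mk x 0)
      --      + ω (mk 0 (-(dualRep π x w))) (mk y 0) = 0
      rw [hskew _ (Sd.mk x 0), hskew _ (Sd.mk y 0)] at hc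
      rw [← keyev, ← keyev, ← keyev] at hc
      simp only [dualRep_apply, map_sub, map_neg, LinearMap.neg_apply] at hc ⊢
      linarith
    exact sub_eq_zero.mp hsub
  refine ⟨e, hA, ?_⟩
  funext p q
  obtain ⟨x, u, rfl⟩ := Sd.mk_surj p
  obtain ⟨y, v, rfl⟩ := Sd.mk_surj q
  rw [hdec x y u v]
  simp only [Sd.pr1_mk, Sd.pr2_mk]
  rw [heapp, heapp, keyev, keyev]


end AuxCorr


/-- `J ↦ ω_J` is a one-to-one correspondence between totally real complex
structures on `T_π h = h ⋉_π V` and lagrangian symplectic structures on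
`T_{π*} h = h ⋉_{π*} V*`. -/
theorem totallyReal_cpx_corresponds_lagrangian_symplectic
    {h V : Type*} [LieRing h] [LieAlgebra ℝ h] [AddCommGroup V] [Module ℝ V]
    [FiniteDimensional ℝ h] [FiniteDimensional ℝ V]
    (hdim : Module.finrank ℝ V = Module.finrank ℝ h)
    (π : h →ₗ⁅ℝ⁆ Module.End ℝ V) :
    (∀ J : Sd π →ₗ[ℝ] Sd π, IsCpxStruct J → IsTotallyReal π J →
        IsLagrangianSympl (dualRep π) (omegaJ π J)) ∧
    (∀ J J' : Sd π →ₗ[ℝ] Sd π, IsCpxStruct J → IsTotallyReal π J →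
        IsCpxStruct J' → IsTotallyReal π J' → omegaJ π J = omegaJ π J' → J = J') ∧
    (∀ ω : Sd (dualRep π) → Sd (dualRep π) → ℝ, IsLagrangianSympl (dualRep π) ω →
        ∃ J : Sd π →ₗ[ℝ] Sd π, IsCpxStruct J ∧ IsTotallyReal π J ∧ omegaJ π J = ω) := by
  refine ⟨?_, ?_, ?_⟩
  · -- J ↦ ω_J lands in lagrangian symplectic structures
    intro J hJ hTR
    obtain ⟨e, hA, rfl⟩ := extract_e π J hJ hTR
    have hω : omegaJ π (mkJ π e) =
        fun p q : Sd (dualRep π) => Sd.pr2 q (e (Sd.pr1 p)) - Sd.pr2 p (e (Sd.pr1 q)) := by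
      funext p q; exact omegaJ_mkJ π e p q
    rw [hω]
    exact omega_lagSympl π e hA
  · -- injectivity
    intro J J' hJ hTR hJ' hTR' hωeq
    obtain ⟨e, hA, rfl⟩ := extract_e π J hJ hTR
    obtain ⟨e', hA', rfl⟩ := extract_e π J' hJ' hTR'
    have he : ∀ x : h, e x = e' x := by
      intro x
      have hsub : (e x - e' x : V) = 0 := by
        rw [← Module.forall_dual_apply_eq_zero_iff ℝ (e x - e' x)]
        intro φ
        have h1 := congrFun (congrFun hωeq (Sd.mk x 0)) (Sd.mk 0 φ)
        rw [omegaJ_mkJ, omegaJ_mkJ] at h1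
        simp only [Sd.pr1_mk, Sd.pr2_mk, map_zero, LinearMap.zero_apply, sub_zero,
          LinearMap.map_zero] at h1
        rw [map_sub, h1, sub_self]
      exact sub_eq_zero.mp hsub
    have hsymm : ∀ u : V, e.symm u = e'.symm u := by
      intro u
      apply e'.injective
      rw [e'.apply_symm_apply, ← he, e.apply_symm_apply]
    apply LinearMap.ext
    intro p
    obtain ⟨x, u, rfl⟩ := Sd.mk_surj p
    rw [mkJ_apply, mkJ_apply, he, hsymm]
  · -- surjectivity
    intro ω hω
    obtain ⟨e, hA, hωeq⟩ := omega_to_e π hdim ω hω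
    refine ⟨mkJ π e, mkJ_cpx π e hA, mkJ_totallyReal π e, ?_⟩
    funext p q
    rw [omegaJ_mkJ, hωeq]
end
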